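/- Divergence of the vector field induced by a test plan: with the hypotheses and notation of the previous statement, v_π belongs to D_q(div_μ) with div_μ(v_π) = d((e_0)_# π)/dμ − d((e_1)_# π)/dμ. That is, for every f ∈ C¹(B) ∩ Lip_b(B), ∫ ⟨d_x f, v_π(x)⟩ dμ(x) = ∫ (f(γ_1) − f(γ_0)) dπ(γ). -/

import Mathlib

open MeasureTheory TopologicalSpace Set ProbabilityTheory
open scoped ENNReal NNReal


/-- `f ∈ C¹(B) ∩ Lip_b(B)`, with (everywhere defined, continuous) Fréchet differential `df`. -/
def IsC1LipBdd {B : Type*} [NormedAddCommGroup B] [NormedSpace ℝ B]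
    (f : B → ℝ) (df : B → B →L[ℝ] ℝ) : Prop :=
  (∀ x, HasFDerivAt f (df x) x) ∧ Continuous df ∧
    (∃ K : NNReal, LipschitzWith K f) ∧ ∃ M : ℝ, ∀ x, |f x| ≤ M

/-- Fundamental theorem of calculus for a continuous function which is a.e. differentiable
on `[0,1]` with derivative dominated by an integrable function controlling its increments. -/
lemma ftc_ae_aux {g g' h : ℝ → ℝ} (hgc : Continuous g) (hmeas : Measurable h)
    (hh0 : ∀ r, 0 ≤ h r) (hint : IntegrableOn h (Icc (0:ℝ) 1))
    (hderiv : ∀ᵐ t ∂(volume.restrict (Icc (0:ℝ) 1)), HasDerivAt g (g' t) t)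
    (hbound : ∀ t, |g' t| ≤ h t)
    (hac : ∀ s ∈ Icc (0:ℝ) 1, ∀ t ∈ Icc (0:ℝ) 1, s ≤ t → |g t - g s| ≤ ∫ r in s..t, h r) :
    ∫ t in Icc (0:ℝ) 1, g' t = g 1 - g 0 := by
  classical
  set h₀ : ℝ → ℝ := (Icc (0:ℝ) 1).indicator h with hh₀
  have hh₀meas : Measurable h₀ := hmeas.indicator measurableSet_Icc
  have hh₀0 : ∀ r, 0 ≤ h₀ r := fun r => by
    by_cases hr : r ∈ Icc (0:ℝ) 1 <;> simp [hh₀, indicator_of_mem, indicator_of_notMem, hr, hh0 r]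
  have hh₀int : Integrable h₀ := (integrable_indicator_iff measurableSet_Icc).2 hint
  set c : ℝ → ℝ := fun t => max 0 (min 1 t) with hc
  have hc_mem : ∀ t, c t ∈ Icc (0:ℝ) 1 :=
    fun t => ⟨le_max_left _ _, max_le zero_le_one (min_le_left _ _)⟩
  have hc_mono : Monotone c := fun s t hst => max_le_max le_rfl (min_le_min le_rfl hst)
  have hc_cont : Continuous c := continuous_const.max (continuous_const.min continuous_id)
  have hc_id : ∀ t ∈ Icc (0:ℝ) 1, c t = t := fun t ht => by
    simp [hc, min_eq_right ht.2, max_eq_right ht.1]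
  set H : ℝ → ℝ := fun t => ∫ r in (0:ℝ)..(c t), h₀ r with hH
  set G : ℝ → ℝ := fun t => g (c t) with hG
  have Hdiff : ∀ s t : ℝ, H t - H s = ∫ r in (c s)..(c t), h r := by
    intro s t
    have h1 : (∫ r in (0:ℝ)..(c t), h₀ r) - ∫ r in (0:ℝ)..(c s), h₀ r
        = ∫ r in (c s)..(c t), h₀ r :=
      intervalIntegral.integral_interval_sub_left hh₀int.intervalIntegrable
        hh₀int.intervalIntegrable
    have h2 : ∫ r in (c s)..(c t), h₀ r = ∫ r in (c s)..(c t), h r := by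
      refine intervalIntegral.integral_congr (fun r hr => ?_)
      have : r ∈ Icc (0:ℝ) 1 := uIcc_subset_Icc (hc_mem s) (hc_mem t) hr
      simp [hh₀, indicator_of_mem this]
    rw [hH]; dsimp only; rw [h1, h2]
  have key : ∀ ⦃s t : ℝ⦄, s ≤ t → |G t - G s| ≤ H t - H s := by
    intro s t hst
    rw [Hdiff s t]
    exact hac _ (hc_mem s) _ (hc_mem t) (hc_mono hst)
  have Hcont : Continuous H :=
    (intervalIntegral.continuous_primitive (fun a b => hh₀int.intervalIntegrable) 0).comp hc_cont
  have Gcont : Continuous G := hgc.comp hc_cont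
  -- Stieltjes functions
  set Su : StieltjesFunction ℝ :=
    { toFun := fun t => H t - G t
      mono' := fun s t hst => by
        show H s - G s ≤ H t - G t
        have := key hst; have := le_abs_self (G t - G s); linarith
      right_continuous' := fun x => ((Hcont.sub Gcont).continuousAt).continuousWithinAt } with hSu
  set Sw : StieltjesFunction ℝ :=
    { toFun := fun t => H t + G t
      mono' := fun s t hst => by
        show H s + G s ≤ H t + G t
        have := key hst; have h2 := neg_abs_le (G t - G s); linarith
      right_continuous' := fun x => ((Hcont.add Gcont).continuousAt).continuousWithinAt } with hSw
  -- the plain primitive of h₀ and its a.e. derivative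
  set H₁ : ℝ → ℝ := fun t => ∫ r in (0:ℝ)..t, h₀ r with hH₁
  have H₁diff : ∀ s t : ℝ, H₁ t - H₁ s = ∫ r in s..t, h₀ r := fun s t =>
    intervalIntegral.integral_interval_sub_left hh₀int.intervalIntegrable
      hh₀int.intervalIntegrable
  have H₁mono : Monotone H₁ := by
    intro s t hst
    have : (0:ℝ) ≤ ∫ r in s..t, h₀ r :=
      intervalIntegral.integral_nonneg hst fun r _ => hh₀0 r
    have := H₁diff s t; linarith
  set SH : StieltjesFunction ℝ :=
    { toFun := H₁
      mono' := H₁mono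
      right_continuous' := fun x =>
        ((intervalIntegral.continuous_primitive (fun a b => hh₀int.intervalIntegrable)
          0).continuousAt).continuousWithinAt } with hSH
  have hSHmeasure : SH.measure = volume.withDensity (fun r => ENNReal.ofReal (h₀ r)) := by
    refine Measure.ext_of_Ioc _ _ fun a b hab => ?_
    rw [SH.measure_Ioc, withDensity_apply _ measurableSet_Ioc]
    have h1 : SH b - SH a = ∫ r in Set.Ioc a b, h₀ r := by
      have : SH b - SH a = ∫ r in a..b, h₀ r := H₁diff a b
      rw [this, intervalIntegral.integral_of_le hab.le]
    rw [h1, ← ofReal_integral_eq_lintegral_ofReal (hh₀int.integrableOn)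
      (Filter.Eventually.of_forall fun r => hh₀0 r)]
  have hH₁d : ∀ᵐ t : ℝ, HasDerivAt H₁ (h₀ t) t := by
    have hrn := Measure.rnDeriv_withDensity (volume : Measure ℝ)
      (hh₀meas.ennreal_ofReal)
    filter_upwards [SH.ae_hasDerivAt, hrn] with t h1 h2
    rw [hSHmeasure] at h1
    rw [h2, ENNReal.toReal_ofReal (hh₀0 t)] at h1
    exact h1
  -- pointwise identification of the Radon–Nikodym derivatives on `Ioo 0 1`
  have hrestr : volume.restrict (Ioo (0:ℝ) 1) = volume.restrict (Icc (0:ℝ) 1) :=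
    Measure.restrict_congr_set Ioo_ae_eq_Icc
  have aeg : ∀ᵐ t ∂(volume.restrict (Ioo (0:ℝ) 1)), HasDerivAt g (g' t) t := by
    rw [hrestr]; exact hderiv
  have hptwise : ∀ᵐ t ∂(volume.restrict (Ioo (0:ℝ) 1)),
      (Su.measure.rnDeriv volume t).toReal = h t - g' t ∧
      (Sw.measure.rnDeriv volume t).toReal = h t + g' t := by
    filter_upwards [ae_restrict_of_ae Su.ae_hasDerivAt, ae_restrict_of_ae Sw.ae_hasDerivAt,
      ae_restrict_of_ae hH₁d, aeg, ae_restrict_mem measurableSet_Ioo] with t hSu' hSw' hH1 hg ht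
    have hmem : Ioo (0:ℝ) 1 ∈ nhds t := isOpen_Ioo.mem_nhds ht
    have hHH1 : H =ᶠ[nhds t] H₁ :=
      Filter.eventually_of_mem hmem fun r hr => by
        simp only [hH, hH₁]; rw [hc_id r (Ioo_subset_Icc_self hr)]
    have hGg : G =ᶠ[nhds t] g :=
      Filter.eventually_of_mem hmem fun r hr => by
        simp only [hG]; rw [hc_id r (Ioo_subset_Icc_self hr)]
    have hH' : HasDerivAt H (h₀ t) t := hH1.congr_of_eventuallyEq hHH1
    have hG' : HasDerivAt G (g' t) t := hg.congr_of_eventuallyEq hGg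
    have h₀t : h₀ t = h t := indicator_of_mem (Ioo_subset_Icc_self ht) h
    constructor
    · have hu : HasDerivAt (fun x => H x - G x) (h t - g' t) t := by
        have := hH'.sub hG'; rw [h₀t] at this; exact this
      exact hSu'.unique hu
    · have hw : HasDerivAt (fun x => H x + G x) (h t + g' t) t := by
        have := hH'.add hG'; rw [h₀t] at this; exact this
      exact hSw'.unique hw
  -- integrability
  have hint' : IntegrableOn h (Ioo (0:ℝ) 1) := hint.mono_set Ioo_subset_Icc_self
  have hg'meas : AEStronglyMeasurable g' (volume.restrict (Ioo (0:ℝ) 1)) := by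
    have h1 : ∀ᵐ t ∂(volume.restrict (Ioo (0:ℝ) 1)), deriv g t = g' t := by
      filter_upwards [aeg] with t ht using ht.deriv
    exact ((stronglyMeasurable_deriv g).aestronglyMeasurable).congr h1
  have hg'int : IntegrableOn g' (Ioo (0:ℝ) 1) := by
    refine Integrable.mono hint' hg'meas (Filter.Eventually.of_forall fun t => ?_)
    rw [Real.norm_eq_abs, Real.norm_eq_abs]
    exact (hbound t).trans (le_abs_self _)
  -- the key inequality from the Stieltjes theory
  have bnd : ∀ (S : StieltjesFunction ℝ) (φ : ℝ → ℝ),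
      ((fun t => (S.measure.rnDeriv volume t).toReal)
          =ᵐ[volume.restrict (Ioo (0:ℝ) 1)] φ) →
      ∫ t in Ioo (0:ℝ) 1, φ t ≤ S 1 - S 0 := by
    intro S φ hφ
    have h1 : ∫ t in Ioo (0:ℝ) 1, φ t
        = ∫ t in Ioo (0:ℝ) 1, (S.measure.rnDeriv volume t).toReal :=
      integral_congr_ae hφ.symm
    have h2 : ∫ t in Ioo (0:ℝ) 1, (S.measure.rnDeriv volume t).toReal
        = (∫⁻ t in Ioo (0:ℝ) 1, S.measure.rnDeriv volume t).toReal := by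
      refine integral_toReal ((Measure.measurable_rnDeriv _ _).aemeasurable) ?_
      exact ae_restrict_of_ae (Measure.rnDeriv_lt_top _ _)
    have h3 : (∫⁻ t in Ioo (0:ℝ) 1, S.measure.rnDeriv volume t) ≤ S.measure (Ioc 0 1) :=
      le_trans (lintegral_mono_set Ioo_subset_Ioc_self)
        (Measure.setLIntegral_rnDeriv_le _)
    have h4 : S.measure (Ioc 0 1) = ENNReal.ofReal (S 1 - S 0) := S.measure_Ioc 0 1
    rw [h1, h2]
    calc (∫⁻ t in Ioo (0:ℝ) 1, S.measure.rnDeriv volume t).toReal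
        ≤ (S.measure (Ioc 0 1)).toReal := by
          refine ENNReal.toReal_mono ?_ h3
          rw [h4]; exact ENNReal.ofReal_ne_top
      _ = S 1 - S 0 := by rw [h4, ENNReal.toReal_ofReal (sub_nonneg.2 (S.mono zero_le_one))]
  -- endpoint values
  have hc0 : c 0 = 0 := by norm_num [hc]
  have hc1 : c 1 = 1 := by norm_num [hc]
  have hH0 : H 0 = 0 := by simp [hH, hc0]
  have hH1v : H 1 = ∫ t in Ioo (0:ℝ) 1, h t := by
    have h1 : H 1 = ∫ r in (0:ℝ)..1, h₀ r := by simp [hH, hc1]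
    rw [h1, intervalIntegral.integral_of_le zero_le_one,
      ← Measure.restrict_congr_set Ioo_ae_eq_Ioc]
    refine setIntegral_congr_fun measurableSet_Ioo fun r hr => ?_
    exact indicator_of_mem (Ioo_subset_Icc_self hr) h
  have hG0 : G 0 = g 0 := by simp [hG, hc0]
  have hG1 : G 1 = g 1 := by simp [hG, hc1]
  -- apply the bound to Su and Sw
  have hu := bnd Su (fun t => h t - g' t) (by filter_upwards [hptwise] with t ht using ht.1)
  have hw := bnd Sw (fun t => h t + g' t) (by filter_upwards [hptwise] with t ht using ht.2)
  have hSu1 : Su 1 - Su 0 = (∫ t in Ioo (0:ℝ) 1, h t) - (g 1 - g 0) := by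
    show (H 1 - G 1) - (H 0 - G 0) = _
    rw [hH1v, hH0, hG0, hG1]; ring
  have hSw1 : Sw 1 - Sw 0 = (∫ t in Ioo (0:ℝ) 1, h t) + (g 1 - g 0) := by
    show (H 1 + G 1) - (H 0 + G 0) = _
    rw [hH1v, hH0, hG0, hG1]; ring
  have hsub : ∫ t in Ioo (0:ℝ) 1, (h t - g' t)
      = (∫ t in Ioo (0:ℝ) 1, h t) - ∫ t in Ioo (0:ℝ) 1, g' t := integral_sub hint' hg'int
  have hadd : ∫ t in Ioo (0:ℝ) 1, (h t + g' t)
      = (∫ t in Ioo (0:ℝ) 1, h t) + ∫ t in Ioo (0:ℝ) 1, g' t := integral_add hint' hg'int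
  rw [hSu1, hsub] at hu
  rw [hSw1, hadd] at hw
  have hIoo : ∫ t in Ioo (0:ℝ) 1, g' t = g 1 - g 0 := by linarith
  rw [← hrestr]
  exact hIoo


set_option synthInstance.maxHeartbeats 1000000 in
set_option maxHeartbeats 2000000 in
/-- Let `(B, μ)` be a weighted Banach space with the Radon–Nikodým
property (encoded by the a.e. differentiability of the curves charged by the plan),
`q ∈ (1, ∞)` and `π` a `q`-test plan.  With `π̂ = π ⊗ L¹|_{[0,1]}`, `ν = e_# π̂` and
`{π̂_x}_x` a disintegration of `π̂` along the evaluation map `e(γ,t) = γ_t`, the vector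
field `v_π(x) = (dν/dμ)(x) ∫ γ'(t) dπ̂_x(γ,t)` belongs to `D_q(div_μ)` with
`div_μ(v_π) = d((e_0)_# π)/dμ - d((e_1)_# π)/dμ`; that is, for every
`f ∈ C¹(B) ∩ Lip_b(B)` one has `∫ ⟨d_x f, v_π(x)⟩ dμ(x) = ∫ (f(γ_1) - f(γ_0)) dπ(γ)`. -/
theorem divergence_of_vectorField_of_testPlan
    {B : Type*} [NormedAddCommGroup B] [NormedSpace ℝ B] [CompleteSpace B]
    [SeparableSpace B] [MeasurableSpace B] [BorelSpace B]
    (μ : Measure B) [IsFiniteMeasure μ]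
    (q : ℝ) (hq : 1 < q)
    [MeasurableSpace C(ℝ, B)] [BorelSpace C(ℝ, B)]
    (π : Measure C(ℝ, B)) [IsProbabilityMeasure π]
    (Cc : ℝ) (hCc : 0 < Cc)
    -- compression: `(e_t)_# π ≤ C μ` for every `t ∈ [0,1]`
    (hcomp : ∀ t ∈ Icc (0:ℝ) 1,
      Measure.map (fun γ : C(ℝ, B) => γ t) π ≤ ENNReal.ofReal Cc • μ)
    -- `π` is concentrated on absolutely continuous curves, a.e. differentiable on `[0,1]`,
    -- whose metric speed is the norm of the derivative
    (hAC : ∀ᵐ γ ∂π,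
      (∀ᵐ t ∂(volume.restrict (Icc (0:ℝ) 1)), DifferentiableAt ℝ (fun r => γ r) t) ∧
      IntegrableOn (fun r => ‖deriv (fun r => γ r) r‖) (Icc (0:ℝ) 1) ∧
      ∀ s ∈ Icc (0:ℝ) 1, ∀ t ∈ Icc (0:ℝ) 1, s ≤ t →
        ‖γ t - γ s‖ ≤ ∫ r in s..t, ‖deriv (fun r => γ r) r‖)
    -- finite kinetic `q`-energy
    (henergy : ∫⁻ pt, (‖deriv (fun r => pt.1 r) pt.2‖₊ : ℝ≥0∞) ^ q
        ∂(π.prod (volume.restrict (Icc (0:ℝ) 1))) < ⊤)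
    -- disintegration `π̂ = ∫ π̂_x dν(x)` of `π̂` along `e`
    (κ : B → Measure (C(ℝ, B) × ℝ)) (hκprob : ∀ x, IsProbabilityMeasure (κ x))
    (hκmeas : ∀ s : Set (C(ℝ, B) × ℝ), MeasurableSet s → Measurable fun x => κ x s)
    (hκconc : ∀ᵐ x ∂(Measure.map (fun pt : C(ℝ, B) × ℝ => pt.1 pt.2)
        (π.prod (volume.restrict (Icc (0:ℝ) 1)))), κ x {pt | pt.1 pt.2 ≠ x} = 0)
    (hκdis : ∀ s : Set (C(ℝ, B) × ℝ), MeasurableSet s →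
      (π.prod (volume.restrict (Icc (0:ℝ) 1))) s =
        ∫⁻ x, κ x s ∂(Measure.map (fun pt : C(ℝ, B) × ℝ => pt.1 pt.2)
          (π.prod (volume.restrict (Icc (0:ℝ) 1))))) :
    ∀ (f : B → ℝ) (df : B → B →L[ℝ] ℝ), IsC1LipBdd f df →
      ∫ x, df x (((Measure.map (fun pt : C(ℝ, B) × ℝ => pt.1 pt.2)
            (π.prod (volume.restrict (Icc (0:ℝ) 1)))).rnDeriv μ x).toReal •
          ∫ pt, deriv (fun r => pt.1 r) pt.2 ∂(κ x)) ∂μ =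
        ∫ γ, (f (γ 1) - f (γ 0)) ∂π := by
  intro f df hf
  obtain ⟨hdf, hdfc, ⟨K, hK⟩, _M, _hM⟩ := hf
  haveI : IsProbabilityMeasure (volume.restrict (Icc (0:ℝ) 1)) :=
    ⟨by simp [Real.volume_Icc]⟩
  set P : Measure (C(ℝ, B) × ℝ) := π.prod (volume.restrict (Icc (0:ℝ) 1)) with hP
  set e : C(ℝ, B) × ℝ → B := fun pt => pt.1 pt.2 with he
  set Vd : C(ℝ, B) × ℝ → B := fun pt => deriv (fun r => pt.1 r) pt.2 with hVdef
  set ν : Measure B := Measure.map e P with hν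
  have he_cont : Continuous e := continuous_eval
  have he_meas : Measurable e := he_cont.measurable
  have hVd : Measurable Vd := measurable_deriv_with_param continuous_eval
  have sVd : StronglyMeasurable Vd :=
    stronglyMeasurable_deriv_with_param continuous_eval
  -- ν is finite and absolutely continuous w.r.t. μ
  haveI : IsProbabilityMeasure ν := Measure.isProbabilityMeasure_map he_meas.aemeasurable
  have hν_le : ν ≤ ENNReal.ofReal Cc • μ := by
    refine Measure.le_iff.2 fun s hs => ?_
    have h1 : ν s = ∫⁻ t, π ((fun γ : C(ℝ, B) => γ t) ⁻¹' s)
        ∂(volume.restrict (Icc (0:ℝ) 1)) := by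
      rw [hν, Measure.map_apply he_meas hs, hP, Measure.prod_apply_symm (he_meas hs)]
      rfl
    have h2 : ∀ᵐ t ∂(volume.restrict (Icc (0:ℝ) 1)),
        π ((fun γ : C(ℝ, B) => γ t) ⁻¹' s) ≤ ENNReal.ofReal Cc * μ s := by
      filter_upwards [ae_restrict_mem measurableSet_Icc] with t ht
      have hev : Measurable fun γ : C(ℝ, B) => γ t := (continuous_eval_const t).measurable
      have := Measure.le_iff'.1 (hcomp t ht) s
      rwa [Measure.map_apply hev hs, Measure.smul_apply, smul_eq_mul] at this
    calc ν s ≤ ∫⁻ _ , ENNReal.ofReal Cc * μ s ∂(volume.restrict (Icc (0:ℝ) 1)) := by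
          rw [h1]; exact lintegral_mono_ae h2
      _ = ENNReal.ofReal Cc * μ s := by
          rw [lintegral_const, measure_univ, mul_one]
      _ = (ENNReal.ofReal Cc • μ) s := by rw [Measure.smul_apply, smul_eq_mul]
  have hνμ : ν ≪ μ := Measure.absolutelyContinuous_of_le_smul hν_le
  -- the disintegration kernel
  set k : Kernel B (C(ℝ, B) × ℝ) :=
    ⟨κ, Measure.measurable_of_measurable_coe κ (fun s hs => hκmeas s hs)⟩ with hk
  haveI : IsMarkovKernel k := ⟨fun a => hκprob a⟩
  have hkapp : ∀ x, k x = κ x := fun x => rfl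
  have hmapsnd : (ν ⊗ₘ k).map Prod.snd = P := by
    refine Measure.ext fun s hs => ?_
    rw [Measure.map_apply measurable_snd hs,
      Measure.compProd_apply (measurable_snd hs)]
    have : ∀ a : B, k a (Prod.mk a ⁻¹' (Prod.snd ⁻¹' s)) = κ a s := fun a => rfl
    simp_rw [this]
    exact (hκdis s hs).symm
  -- transfer of lintegrals and integrals through the disintegration
  have hlin : ∀ (G : C(ℝ, B) × ℝ → ℝ≥0∞), Measurable G →
      ∫⁻ z, G z ∂P = ∫⁻ x, ∫⁻ y, G y ∂(k x) ∂ν := by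
    intro G hG
    rw [← hmapsnd, lintegral_map hG measurable_snd]
    exact Measure.lintegral_compProd (hG.comp measurable_snd)
  -- energy estimates
  have hpow_le : ∀ a : ℝ≥0∞, a ≤ 1 + a ^ q := by
    intro a
    rcases le_total a 1 with ha | ha
    · exact le_add_right ha
    · calc a = a ^ (1:ℝ) := (ENNReal.rpow_one a).symm
        _ ≤ a ^ q := ENNReal.rpow_le_rpow_of_exponent_le ha hq.le
        _ ≤ 1 + a ^ q := le_add_self
  have hGq : Measurable fun z => (‖Vd z‖₊ : ℝ≥0∞) ^ q :=
    ENNReal.continuous_rpow_const.measurable.comp hVd.nnnorm.coe_nnreal_ennreal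
  have henergy' : ∫⁻ z, (‖Vd z‖₊ : ℝ≥0∞) ^ q ∂P < ⊤ := henergy
  have hVd1 : ∫⁻ z, (‖Vd z‖₊ : ℝ≥0∞) ∂P < ⊤ := by
    calc ∫⁻ z, (‖Vd z‖₊ : ℝ≥0∞) ∂P ≤ ∫⁻ z, (1 + (‖Vd z‖₊ : ℝ≥0∞) ^ q) ∂P :=
          lintegral_mono fun z => hpow_le _
      _ = P univ + ∫⁻ z, (‖Vd z‖₊ : ℝ≥0∞) ^ q ∂P := by
          rw [lintegral_add_left measurable_const, lintegral_one]
      _ < ⊤ := ENNReal.add_lt_top.2 ⟨measure_lt_top _ _, henergy'⟩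
  have hae_q : ∀ᵐ x ∂ν, ∫⁻ y, (‖Vd y‖₊ : ℝ≥0∞) ^ q ∂(k x) < ⊤ := by
    refine ae_lt_top (Measurable.lintegral_kernel hGq) ?_
    rw [← hlin _ hGq]
    exact henergy'.ne
  have hae_int : ∀ᵐ x ∂ν, Integrable Vd (k x) := by
    filter_upwards [hae_q] with x hx
    refine ⟨sVd.aestronglyMeasurable, ?_⟩
    have : ∫⁻ y, (‖Vd y‖₊ : ℝ≥0∞) ∂(k x) ≤ (k x) univ + ∫⁻ y, (‖Vd y‖₊ : ℝ≥0∞) ^ q ∂(k x) := by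
      calc ∫⁻ y, (‖Vd y‖₊ : ℝ≥0∞) ∂(k x) ≤ ∫⁻ y, (1 + (‖Vd y‖₊ : ℝ≥0∞) ^ q) ∂(k x) :=
            lintegral_mono fun z => hpow_le _
        _ = (k x) univ + _ := by rw [lintegral_add_left measurable_const, lintegral_one]
    exact lt_of_le_of_lt this (ENNReal.add_lt_top.2 ⟨measure_lt_top _ _, hx⟩)
  -- the integrand F
  set F : C(ℝ, B) × ℝ → ℝ := fun z => df (e z) (Vd z) with hF
  have hdf_norm : ∀ x, ‖df x‖ ≤ K := fun x => (hdf x).le_of_lipschitz hK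
  have hF_bound : ∀ z, |F z| ≤ (K : ℝ) * ‖Vd z‖ := by
    intro z
    calc |F z| = ‖df (e z) (Vd z)‖ := (Real.norm_eq_abs _).symm
      _ ≤ ‖df (e z)‖ * ‖Vd z‖ := (df (e z)).le_opNorm _
      _ ≤ (K : ℝ) * ‖Vd z‖ := mul_le_mul_of_nonneg_right (hdf_norm _) (norm_nonneg _)
  have hFmeas : Measurable F := by
    have h1 : Continuous fun p : B × B => df p.1 p.2 :=
      isBoundedBilinearMap_apply.continuous.comp
        ((hdfc.comp continuous_fst).prodMk continuous_snd)
    exact h1.measurable.comp (he_meas.prodMk hVd)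
  have hFint : Integrable F P := by
    refine ⟨hFmeas.aestronglyMeasurable, ?_⟩
    have h1 : ∀ z, (‖F z‖₊ : ℝ≥0∞) ≤ (K : ℝ≥0∞) * (‖Vd z‖₊ : ℝ≥0∞) := by
      intro z
      rw [← ENNReal.coe_mul]
      refine ENNReal.coe_le_coe.2 ?_
      have := hF_bound z
      have h2 : ‖F z‖ ≤ (K : ℝ) * ‖Vd z‖ := by rwa [Real.norm_eq_abs]
      calc ‖F z‖₊ ≤ K * ‖Vd z‖₊ := by
            rw [← nnnorm_norm]
            exact NNReal.coe_le_coe.1 (by push_cast; simpa using h2)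
        _ = K * ‖Vd z‖₊ := rfl
    calc (∫⁻ z, (‖F z‖₊ : ℝ≥0∞) ∂P) ≤ ∫⁻ z, (K : ℝ≥0∞) * (‖Vd z‖₊ : ℝ≥0∞) ∂P :=
          lintegral_mono h1
      _ = (K : ℝ≥0∞) * ∫⁻ z, (‖Vd z‖₊ : ℝ≥0∞) ∂P := lintegral_const_mul _ hVd.nnnorm.coe_nnreal_ennreal
      _ < ⊤ := ENNReal.mul_lt_top ENNReal.coe_lt_top hVd1
  -- the chain of equalities
  have step12 : ∫ x, df x ((ν.rnDeriv μ x).toReal • ∫ y, Vd y ∂(κ x)) ∂μ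
      = ∫ x, df x (∫ y, Vd y ∂(κ x)) ∂ν := by
    have h1 : ∀ x, df x ((ν.rnDeriv μ x).toReal • ∫ y, Vd y ∂(κ x))
        = (ν.rnDeriv μ x).toReal • df x (∫ y, Vd y ∂(κ x)) :=
      fun x => (df x).map_smul _ _
    simp_rw [h1]
    exact integral_rnDeriv_smul hνμ
  have step3 : ∫ x, df x (∫ y, Vd y ∂(κ x)) ∂ν = ∫ x, ∫ y, F y ∂(k x) ∂ν := by
    refine integral_congr_ae ?_
    filter_upwards [hae_int, hκconc] with x hxint hxconc
    have h1 : df x (∫ y, Vd y ∂(κ x)) = ∫ y, df x (Vd y) ∂(k x) :=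
      (ContinuousLinearMap.integral_comp_comm (df x) hxint).symm
    rw [h1]
    refine integral_congr_ae ?_
    have h2 : ∀ᵐ y ∂(k x), e y = x := ae_iff.mpr hxconc
    filter_upwards [h2] with y hy
    rw [hF]; dsimp only; rw [hy]
  have step4 : ∫ z, F z ∂P = ∫ x, ∫ y, F y ∂(k x) ∂ν := by
    have hQint : Integrable (fun z : B × (C(ℝ, B) × ℝ) => F z.2) (ν ⊗ₘ k) :=
      (integrable_map_measure hFmeas.aestronglyMeasurable measurable_snd.aemeasurable).1
        (by rwa [hmapsnd])
    calc ∫ z, F z ∂P = ∫ z, F z ∂((ν ⊗ₘ k).map Prod.snd) := by rw [hmapsnd]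
      _ = ∫ z, F z.2 ∂(ν ⊗ₘ k) :=
          integral_map measurable_snd.aemeasurable
            (by rw [hmapsnd]; exact hFmeas.aestronglyMeasurable)
      _ = ∫ x, ∫ y, F y ∂(k x) ∂ν := Measure.integral_compProd hQint
  have step5 : ∫ z, F z ∂P = ∫ γ, (∫ t in Icc (0:ℝ) 1, F (γ, t)) ∂π :=
    integral_prod F hFint
  rw [step12, step3, ← step4, step5]
  refine integral_congr_ae ?_
  filter_upwards [hAC] with γ hγ
  obtain ⟨hd, hi, hlen⟩ := hγ
  have hγc : Continuous fun t => f (γ t) := hK.continuous.comp γ.continuous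
  have hhm : Measurable fun r => (K : ℝ) * ‖deriv (fun r' => γ r') r‖ :=
    ((measurable_deriv _).norm).const_mul _
  have hres := ftc_ae_aux (g := fun t => f (γ t))
    (g' := fun t => df (γ t) (deriv (fun r => γ r) t))
    (h := fun r => (K : ℝ) * ‖deriv (fun r' => γ r') r‖) hγc hhm
    (fun r => mul_nonneg K.coe_nonneg (norm_nonneg _)) (hi.const_mul _)
    ?_ ?_ ?_
  · exact hres
  · filter_upwards [hd] with t ht
    exact (hdf (γ t)).comp_hasDerivAt t ht.hasDerivAt
  · intro t
    calc |df (γ t) (deriv (fun r => γ r) t)|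
        = ‖df (γ t) (deriv (fun r => γ r) t)‖ := (Real.norm_eq_abs _).symm
      _ ≤ ‖df (γ t)‖ * ‖deriv (fun r => γ r) t‖ := (df (γ t)).le_opNorm _
      _ ≤ (K : ℝ) * ‖deriv (fun r => γ r) t‖ :=
          mul_le_mul_of_nonneg_right (hdf_norm _) (norm_nonneg _)
  · intro s hs t ht hst
    calc |f (γ t) - f (γ s)| ≤ (K : ℝ) * ‖γ t - γ s‖ := by
          have := hK.dist_le_mul (γ t) (γ s)
          rwa [Real.dist_eq, dist_eq_norm] at this
      _ ≤ (K : ℝ) * ∫ r in s..t, ‖deriv (fun r' => γ r') r‖ :=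
          mul_le_mul_of_nonneg_left (hlen s hs t ht hst) K.coe_nonneg
      _ = ∫ r in s..t, (K : ℝ) * ‖deriv (fun r' => γ r') r‖ :=
          (intervalIntegral.integral_const_mul _ _).symm
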